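/- If G satisfies the loop law, then for every real z > 0 the matrix A(z) is diagonalizable over ℝ with all eigenvalues real; that is, there exists an invertible real matrix P such that P⁻¹ · A(z) · P is a diagonal matrix (whose diagonal entries are the eigenvalues of the real symmetric matrix A(1)). -/

import Mathlib

open Matrix BigOperators

variable {V : Type*} [Fintype V] [DecidableEq V]

/-- The signed weight `w*`: `w*(u,v) = w(u,v)` if `(u,v)` is an arc, and
`w*(u,v) = -w(v,u)` if `(v,u)` is an arc. -/
def wstar (E : V → V → Prop) [DecidableRel E] (w : V → V → ℝ) (u v : V) : ℝ :=
  if E u v then w u v else -(w v u)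

/-- The polynomial matrix `A(z)`, with `(A(z))_{uv} = z ^ w*(u,v)` (real power)
whenever `(u,v)` or `(v,u)` is an arc, and `0` otherwise. -/
noncomputable def polyMat (E : V → V → Prop) [DecidableRel E]
    (w : V → V → ℝ) (z : ℝ) : Matrix V V ℝ :=
  fun u v => if E u v ∨ E v u then z ^ (wstar E w u v) else 0

/-- Walks of length `r` from `u` to `v` in the underlying graph `UG`. -/
def walks (E : V → V → Prop) [DecidableRel E] (r : ℕ) (u v : V) :
    Finset (Fin (r + 1) → V) :=
  Finset.univ.filter fun p =>
    p 0 = u ∧ p (Fin.last r) = v ∧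
      ∀ i : Fin r, E (p i.castSucc) (p i.succ) ∨ E (p i.succ) (p i.castSucc)

/-- The weight `w*(p)` of a walk `p` of length `r`. -/
def walkWeight (E : V → V → Prop) [DecidableRel E] (w : V → V → ℝ) {r : ℕ}
    (p : Fin (r + 1) → V) : ℝ :=
  ∑ i : Fin r, wstar E w (p i.castSucc) (p i.succ)

/-- The loop law: every closed walk in the underlying graph has weight `0`. -/
def LoopLaw (E : V → V → Prop) [DecidableRel E] (w : V → V → ℝ) : Prop :=
  ∀ (r : ℕ) (p : Fin (r + 1) → V),
    (∀ i : Fin r, E (p i.castSucc) (p i.succ) ∨ E (p i.succ) (p i.castSucc)) →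
    p 0 = p (Fin.last r) → walkWeight E w p = 0

/-! ### Auxiliary material -/

section Aux

variable (E : V → V → Prop) [DecidableRel E] (w : V → V → ℝ)

lemma wstar_antisymm (honedir : ∀ u v, E u v → ¬ E v u) {u v : V}
    (h : E u v ∨ E v u) : wstar E w v u = -wstar E w u v := by
  rcases h with h | h
  · simp [wstar, h, honedir u v h]
  · simp [wstar, h, honedir v u h]

/-- The underlying simple graph. -/
def UGraph (hl : ∀ u, ¬ E u u) : SimpleGraph V where
  Adj u v := E u v ∨ E v u
  symm := ⟨fun _ _ h => Or.symm h⟩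
  loopless := ⟨fun u (h : E u u ∨ E u u) => h.elim (hl u) (hl u)⟩

variable {G : SimpleGraph V}

/-- The weight of a `SimpleGraph.Walk`. -/
noncomputable def wSum {u v : V} (p : G.Walk u v) : ℝ :=
  ∑ i : Fin p.length, wstar E w (p.getVert i) (p.getVert (i + 1))

lemma wSum_nil {u : V} : wSum E w (SimpleGraph.Walk.nil : G.Walk u u) = 0 := by
  exact Finset.sum_eq_zero fun i _ => i.elim0

lemma wSum_cons {u v x : V} (h : G.Adj u v) (p : G.Walk v x) :
    wSum E w (SimpleGraph.Walk.cons h p) = wstar E w u v + wSum E w p := by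
  unfold wSum
  show ∑ i : Fin (p.length + 1), wstar E w ((SimpleGraph.Walk.cons h p).getVert i)
    ((SimpleGraph.Walk.cons h p).getVert (i + 1)) = _
  simp [Fin.sum_univ_succ, SimpleGraph.Walk.getVert_cons_succ]

lemma wSum_append {u v x : V} (p : G.Walk u v) (q : G.Walk v x) :
    wSum E w (p.append q) = wSum E w p + wSum E w q := by
  induction p with
  | nil => simp [wSum_nil]
  | cons h p ih =>
      rw [SimpleGraph.Walk.cons_append, wSum_cons, wSum_cons, ih]
      ring

lemma wSum_reverse (honedir : ∀ u v, E u v → ¬ E v u) {u v : V} (p : G.Walk u v)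
    (hG : ∀ a b, G.Adj a b → (E a b ∨ E b a)) :
    wSum E w p.reverse = -wSum E w p := by
  induction p with
  | nil => simp [wSum_nil]
  | cons h p ih =>
      rw [SimpleGraph.Walk.reverse_cons, wSum_append, ih, wSum_cons, wSum_cons, wSum_nil,
        wstar_antisymm E w honedir (hG _ _ h)]
      ring

lemma wSum_closed (hLL : LoopLaw E w)
    (hG : ∀ a b, G.Adj a b → (E a b ∨ E b a)) {a : V} (c : G.Walk a a) :
    wSum E w c = 0 := by
  have h := hLL c.length (fun i : Fin (c.length + 1) => c.getVert i)
    (fun i => by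
      simpa using hG _ _ (c.adj_getVert_succ i.isLt))
    (by simp)
  simpa [walkWeight, wSum] using h

lemma wSum_conj (hLL : LoopLaw E w) (honedir : ∀ u v, E u v → ¬ E v u)
    (hG : ∀ a b, G.Adj a b → (E a b ∨ E b a)) {a b u v : V}
    (p1 : G.Walk a u) (p2 : G.Walk b v) (hab : a = b) (h : G.Adj u v) :
    wSum E w p2 = wSum E w p1 + wstar E w u v := by
  subst hab
  have hc : wSum E w (p1.append (SimpleGraph.Walk.cons h p2.reverse)) = 0 :=
    wSum_closed E w hLL hG _
  rw [wSum_append, wSum_cons, wSum_reverse E w honedir p2 hG] at hc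
  linarith

end Aux

section Pot

variable (E : V → V → Prop) [DecidableRel E] (w : V → V → ℝ)
  (hl : ∀ u, ¬ E u u)

/-- A potential function obtained from choosing, for each vertex, a walk from the
representative of its connected component. -/
noncomputable def pot (u : V) : ℝ :=
  wSum E w (Classical.choice
    (Quotient.mk_out (s := (UGraph E hl).reachableSetoid) u :
      (UGraph E hl).Reachable _ u))

lemma pot_adj (honedir : ∀ u v, E u v → ¬ E v u) (hLL : LoopLaw E w)
    {u v : V} (h : E u v ∨ E v u) :
    pot E w hl v = pot E w hl u + wstar E w u v := by
  set G := UGraph E hl with hGdef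
  have hadj : G.Adj u v := h
  have hc : (G.connectedComponentMk u) = (G.connectedComponentMk v) :=
    SimpleGraph.ConnectedComponent.sound ⟨SimpleGraph.Walk.cons hadj SimpleGraph.Walk.nil⟩
  have hout : (@Quotient.out _ G.reachableSetoid (G.connectedComponentMk u)) =
      (@Quotient.out _ G.reachableSetoid (G.connectedComponentMk v)) := by
    rw [hc]
  exact wSum_conj E w hLL honedir (fun _ _ hab => hab) _ _ hout hadj

end Pot

/-- Characteristic polynomial is invariant under conjugation. -/
lemma charpoly_conj_aux {n R : Type*} [Fintype n] [DecidableEq n] [CommRing R]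
    (A P N : Matrix n n R) (h1 : P * N = 1) (h2 : N * P = 1) :
    (N * A * P).charpoly = A.charpoly := by
  have hmap : ∀ M M' : Matrix n n R,
      (M * M').map (Polynomial.C : R →+* Polynomial R) =
        M.map (Polynomial.C : R →+* Polynomial R) *
          M'.map (Polynomial.C : R →+* Polynomial R) := fun M M' => Matrix.map_mul
  have hone : (1 : Matrix n n R).map (Polynomial.C : R →+* Polynomial R) = 1 :=
    Matrix.map_one _ (map_zero _) (map_one _)
  have hcm : charmatrix (N * A * P) =
      N.map (Polynomial.C : R →+* Polynomial R) * charmatrix A *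
        P.map (Polynomial.C : R →+* Polynomial R) := by
    rw [charmatrix, charmatrix, RingHom.mapMatrix_apply, RingHom.mapMatrix_apply, hmap, hmap]
    have hN : N.map (Polynomial.C : R →+* Polynomial R) *
          Matrix.scalar n (Polynomial.X : Polynomial R) =
        Matrix.scalar n (Polynomial.X : Polynomial R) *
          N.map (Polynomial.C : R →+* Polynomial R) :=
      (Matrix.scalar_commute (Polynomial.X : Polynomial R)
        (fun r' => Commute.all _ r') _).symm
    rw [mul_sub, sub_mul, hN,
      mul_assoc (Matrix.scalar n (Polynomial.X : Polynomial R))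
        (N.map (Polynomial.C : R →+* Polynomial R))
        (P.map (Polynomial.C : R →+* Polynomial R)),
      show (N.map (Polynomial.C : R →+* Polynomial R) *
          P.map (Polynomial.C : R →+* Polynomial R)) = 1 from by rw [← hmap, h2, hone],
      mul_one]
  have hdet : (P.map (Polynomial.C : R →+* Polynomial R)).det *
      (N.map (Polynomial.C : R →+* Polynomial R)).det = 1 := by
    rw [← Matrix.det_mul, ← hmap, h1, hone, Matrix.det_one]
  rw [Matrix.charpoly, Matrix.charpoly, hcm, Matrix.det_mul, Matrix.det_mul]
  linear_combination A.charmatrix.det * hdet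

theorem loopLaw_diagonalizable (E : V → V → Prop) [DecidableRel E]
    (w : V → V → ℝ)
    (hloopless : ∀ u, ¬ E u u)
    (honedir : ∀ u v, E u v → ¬ E v u)
    (hLL : LoopLaw E w) (z : ℝ) (hz : 0 < z) :
    ∃ (P : Matrix V V ℝ), IsUnit P.det ∧
      ∃ (d : V → ℝ), P⁻¹ * polyMat E w z * P = Matrix.diagonal d ∧
        (Matrix.diagonal d).charpoly = (polyMat E w 1).charpoly := by
  classical
  set φ := pot E w hloopless with hφ
  set Dm : Matrix V V ℝ := Matrix.diagonal (fun u => z ^ (-(φ u))) with hDm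
  set Dp : Matrix V V ℝ := Matrix.diagonal (fun u => z ^ (φ u)) with hDp
  have hzne : ∀ x : ℝ, z ^ x ≠ 0 := fun x => (Real.rpow_pos_of_pos hz x).ne'
  have hDmDp : Dm * Dp = 1 := by
    rw [hDm, hDp, Matrix.diagonal_mul_diagonal]
    rw [show (fun u => z ^ (-(φ u)) * z ^ (φ u)) = fun _ => (1 : ℝ) from ?_, Matrix.diagonal_one]
    funext u
    rw [← Real.rpow_add hz]
    simp
  have hDpDm : Dp * Dm = 1 := by
    rw [hDm, hDp, Matrix.diagonal_mul_diagonal]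
    rw [show (fun u => z ^ (φ u) * z ^ (-(φ u))) = fun _ => (1 : ℝ) from ?_, Matrix.diagonal_one]
    funext u
    rw [← Real.rpow_add hz]
    simp
  -- the similarity between A(z) and A(1)
  have hsim : polyMat E w z = Dm * polyMat E w 1 * Dp := by
    ext u v
    have hentry : (Dm * polyMat E w 1 * Dp) u v
        = z ^ (-(φ u)) * (polyMat E w 1 u v) * z ^ (φ v) := by
      rw [hDm, hDp, Matrix.mul_diagonal, Matrix.diagonal_mul]
    rw [hentry]
    by_cases h : E u v ∨ E v u
    · have hpot : φ v = φ u + wstar E w u v := pot_adj E w hloopless honedir hLL h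
      simp only [polyMat, if_pos h, Real.one_rpow, mul_one, one_mul]
      rw [mul_comm, ← Real.rpow_add hz, hpot]
      ring_nf
    · simp [polyMat, if_neg h]
  -- spectral theorem for A(1)
  have hA1 : (polyMat E w 1).IsHermitian := by
    ext u v
    simp only [Matrix.conjTranspose_apply, star_trivial, polyMat, Real.one_rpow]
    by_cases h : E u v ∨ E v u
    · rw [if_pos h, if_pos (Or.symm h)]
    · rw [if_neg h, if_neg (fun h' => h (Or.symm h'))]
  set U : Matrix V V ℝ := (hA1.eigenvectorUnitary : Matrix V V ℝ) with hU
  have hU1 : U * star U = 1 := (Matrix.mem_unitaryGroup_iff).mp hA1.eigenvectorUnitary.2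
  have hU2 : star U * U = 1 := (Matrix.mem_unitaryGroup_iff').mp hA1.eigenvectorUnitary.2
  have hdiag : star U * (polyMat E w 1) * U
      = Matrix.diagonal (RCLike.ofReal ∘ hA1.eigenvalues) :=
    by rw [← hA1.conjStarAlgAut_star_eigenvectorUnitary, Unitary.conjStarAlgAut_star_apply]
  refine ⟨Dm * U, ?_, RCLike.ofReal ∘ hA1.eigenvalues, ?_, ?_⟩
  · rw [Matrix.det_mul]
    refine (IsUnit.mul ?_ ?_)
    · rw [isUnit_iff_ne_zero, hDm, Matrix.det_diagonal]
      exact Finset.prod_ne_zero_iff.mpr fun u _ => hzne _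
    · rw [isUnit_iff_ne_zero]
      intro h0
      have := congrArg Matrix.det hU1
      rw [Matrix.det_mul, h0, zero_mul, Matrix.det_one] at this
      exact zero_ne_one this
  · have hPinv : (Dm * U)⁻¹ = star U * Dp := by
      apply Matrix.inv_eq_right_inv
      calc Dm * U * (star U * Dp) = Dm * (U * star U) * Dp := by
            rw [Matrix.mul_assoc, Matrix.mul_assoc, Matrix.mul_assoc]
        _ = Dm * Dp := by rw [hU1, Matrix.mul_one]
        _ = 1 := hDmDp
    rw [hPinv, hsim]
    calc star U * Dp * (Dm * polyMat E w 1 * Dp) * (Dm * U)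
        = star U * (Dp * Dm) * polyMat E w 1 * (Dp * Dm) * U := by
          simp only [Matrix.mul_assoc]
      _ = star U * polyMat E w 1 * U := by
          rw [hDpDm]
          simp only [Matrix.mul_one, Matrix.one_mul, Matrix.mul_assoc]
      _ = _ := hdiag
  · rw [← hdiag]
    exact charpoly_conj_aux (polyMat E w 1) U (star U) hU1 hU2
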